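/- The pair (E₃, M₃) = (Surj, Inj ∩ Inv ∩ Tot) is a factorization system on Kl(T_M): (i) every Kleisli morphism f : X → Option (M × Z) factors as m ∘ e (Kleisli composition) with e in Surj and m in Inj ∩ Inv ∩ Tot; and (ii) for every commuting square v ∘ e = m ∘ u with e : X → Option (M × Y₁) in Surj, m : Y₂ → Option (M × Z) in Inj ∩ Inv ∩ Tot, u : X → Option (M × Y₂) and v : Y₁ → Option (M × Z), there is a unique d : Y₁ → Option (M × Y₂) with d ∘ e = u and m ∘ d = v. -/

import Mathlib

/-- Kleisli composition for the monad `T_M X = Option (M × X)`. -/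
def KlComp {M : Type} [Monoid M] {X Y Z : Type}
    (g : Y → Option (M × Z)) (f : X → Option (M × Y)) : X → Option (M × Z) :=
  fun x => (f x).bind fun p => (g p.2).map fun q => (p.1 * q.1, q.2)

/-- The Kleisli identity on `X`. -/
def KlId (M : Type) [Monoid M] (X : Type) : X → Option (M × X) :=
  fun x => some (1, x)

/-- A Kleisli morphism is an isomorphism when it has a two-sided inverse. -/
def IsKlIso {M : Type} [Monoid M] {X Y : Type} (f : X → Option (M × Y)) : Prop :=
  ∃ g : Y → Option (M × X), KlComp g f = KlId M X ∧ KlComp f g = KlId M Y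

/-- The class `Surj` of Kleisli morphisms. -/
def KlSurj {M X Y : Type} (f : X → Option (M × Y)) : Prop :=
  ∀ y : Y, ∃ (x : X) (υ : M), f x = some (υ, y)

/-- The class `Inj` of Kleisli morphisms. -/
def KlInj {M X Y : Type} (f : X → Option (M × Y)) : Prop :=
  ∀ (x x' : X) (υ υ' : M) (y : Y), f x = some (υ, y) → f x' = some (υ', y) → x = x'

/-- The class `Tot` of Kleisli morphisms. -/
def KlTot {M X Y : Type} (f : X → Option (M × Y)) : Prop :=
  ∀ x : X, f x ≠ none

/-- The class `Inv` of Kleisli morphisms. -/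
def KlInv {M : Type} [Monoid M] {X Y : Type} (f : X → Option (M × Y)) : Prop :=
  ∀ (x : X) (υ : M) (y : Y), f x = some (υ, y) → IsUnit υ

/-- Auxiliary: the `Surj`-part of the image factorization. -/
def factorE {M X Z : Type} (f : X → Option (M × Z)) :
    X → Option (M × {z : Z // ∃ x υ, f x = some (υ, z)}) :=
  fun x => match h : f x with
  | none => none
  | some p => some (p.1, ⟨p.2, x, p.1, h⟩)

theorem factorization_system_E3_M3 (M : Type) [Monoid M] :
    (∀ (X Z : Type) (f : X → Option (M × Z)),
      ∃ (Y : Type) (e : X → Option (M × Y)) (m : Y → Option (M × Z)),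
        KlComp m e = f ∧ KlSurj e ∧ (KlInj m ∧ KlInv m ∧ KlTot m)) ∧
    (∀ (X Y₁ Y₂ Z : Type) (e : X → Option (M × Y₁)) (m : Y₂ → Option (M × Z))
        (u : X → Option (M × Y₂)) (v : Y₁ → Option (M × Z)),
      KlSurj e → KlInj m → KlInv m → KlTot m →
      KlComp v e = KlComp m u →
      ∃! d : Y₁ → Option (M × Y₂), KlComp d e = u ∧ KlComp m d = v) := by
  classical
  constructor
  · -- factorization
    intro X Z f
    refine ⟨{z : Z // ∃ x υ, f x = some (υ, z)}, factorE f,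
      fun y => some (1, y.1), ?_, ?_, ?_, ?_, ?_⟩
    · funext x
      unfold KlComp factorE
      split <;> simp_all
    · rintro ⟨z, x, υ, hx⟩
      refine ⟨x, υ, ?_⟩
      unfold factorE
      split
      · simp_all
      · rename_i p hp
        rw [hx] at hp
        cases hp
        rfl
    · rintro y y' υ υ' z hy hy'
      simp only [Option.some.injEq, Prod.mk.injEq] at hy hy'
      exact Subtype.ext (hy.2.trans hy'.2.symm)
    · rintro y υ z hy
      simp only [Option.some.injEq, Prod.mk.injEq] at hy
      exact hy.1 ▸ isUnit_one
    · intro y h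
      simp at h
  · -- diagonal fill-in
    intro X Y₁ Y₂ Z e m u v hse hinjm hinvm htotm hsq
    have hm : ∀ y₂ : Y₂, ∃ μ z ν, m y₂ = some (μ, z) ∧ μ * ν = 1 ∧ ν * μ = 1 := by
      intro y₂
      cases h : m y₂ with
      | none => exact absurd h (htotm y₂)
      | some p =>
        obtain ⟨w, hw⟩ := hinvm y₂ p.1 p.2 (by rw [h])
        exact ⟨p.1, p.2, ↑w⁻¹, rfl, by rw [← hw]; exact w.mul_inv,
          by rw [← hw]; exact w.inv_mul⟩
    choose μf zf νf hmspec hmul1 hmul2 using hm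
    have hzf : ∀ y y' : Y₂, zf y = zf y' → y = y' := by
      intro y y' h
      exact hinjm y y' (μf y) (μf y') (zf y) (hmspec y) (h ▸ hmspec y')
    have key : ∀ (y₁ : Y₁) (σ : M) (z : Z), v y₁ = some (σ, z) → ∃ y₂, zf y₂ = z := by
      intro y₁ σ z hv
      obtain ⟨x, υ, hx⟩ := hse y₁
      have h := congrFun hsq x
      unfold KlComp at h
      rw [hx, Option.bind_some, hv, Option.map_some] at h
      cases hu : u x with
      | none => rw [hu, Option.bind_none] at h; simp at h
      | some p =>
        rw [hu, Option.bind_some, hmspec p.2, Option.map_some,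
          Option.some.injEq, Prod.mk.injEq] at h
        exact ⟨p.2, h.2.symm⟩
    refine ⟨fun y₁ => (v y₁).bind fun p =>
        if h : ∃ y₂, zf y₂ = p.2 then some (p.1 * νf h.choose, h.choose) else none,
      ⟨?_, ?_⟩, ?_⟩
    · -- d ∘ e = u
      funext x
      have h := congrFun hsq x
      unfold KlComp at h ⊢
      beta_reduce
      cases hx : e x with
      | none =>
        rw [hx, Option.bind_none] at h
        simp only [Option.bind_none]
        cases hu : u x with
        | none => rfl
        | some p =>
          rw [hu, Option.bind_some, hmspec p.2, Option.map_some] at h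
          simp at h
      | some p =>
        rw [hx, Option.bind_some] at h
        simp only [Option.bind_some]
        cases hu : u x with
        | none =>
          rw [hu, Option.bind_none] at h
          have hv : v p.2 = none := by
            cases hv : v p.2 with
            | none => rfl
            | some r =>
              rw [hv, Option.map_some] at h
              simp at h
          rw [hv, Option.bind_none, Option.map_none]
        | some q =>
          rw [hu, Option.bind_some, hmspec q.2, Option.map_some] at h
          cases hv : v p.2 with
          | none =>
            rw [hv, Option.map_none] at h
            simp at h
          | some r =>
            rw [hv, Option.map_some, Option.some.injEq, Prod.mk.injEq] at h
            obtain ⟨h1, h2⟩ := h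
            have hex : ∃ y₂, zf y₂ = r.2 := ⟨q.2, h2.symm⟩
            have hch : hex.choose = q.2 := hzf _ _ (hex.choose_spec.trans h2)
            rw [Option.bind_some, dif_pos hex, Option.map_some, hch]
            have heq : p.1 * (r.1 * νf q.2) = q.1 := by
              rw [← mul_assoc, h1, mul_assoc, hmul1, mul_one]
            rw [heq]
    · -- m ∘ d = v
      funext y₁
      unfold KlComp
      beta_reduce
      cases hv : v y₁ with
      | none => rw [Option.bind_none, Option.bind_none]
      | some p =>
        have hex : ∃ y₂, zf y₂ = p.2 := key y₁ p.1 p.2 hv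
        rw [Option.bind_some, dif_pos hex, Option.bind_some, hmspec, Option.map_some,
          mul_assoc, hmul2, mul_one, hex.choose_spec]
    · -- uniqueness
      rintro d' ⟨-, hd2⟩
      funext y₁
      have hv' := congrFun hd2 y₁
      unfold KlComp at hv'
      cases hv : v y₁ with
      | none =>
        cases hd : d' y₁ with
        | none => rfl
        | some p =>
          rw [hd, Option.bind_some, hmspec p.2, Option.map_some, hv] at hv'
          simp at hv'
      | some p =>
        cases hd : d' y₁ with
        | none =>
          rw [hd, Option.bind_none, hv] at hv'
          simp at hv'
        | some q =>
          rw [hd, Option.bind_some, hmspec q.2, Option.map_some, hv,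
            Option.some.injEq, Prod.mk.injEq] at hv'
          obtain ⟨h1, h2⟩ := hv'
          have hex : ∃ y₂, zf y₂ = p.2 := ⟨q.2, h2⟩
          have hch : hex.choose = q.2 := hzf _ _ (hex.choose_spec.trans h2.symm)
          rw [Option.bind_some, dif_pos hex, hch]
          have heq : p.1 * νf q.2 = q.1 := by rw [← h1, mul_assoc, hmul1, mul_one]
          rw [heq]
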